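/- arXiv:2501.08789 — 3 statements merged into one kernel-verified Lean document; each statement's English description precedes it below -/
import Mathlib

section
/- The Laplace transform of the function t ↦ t^{β-1} E_{α,β}^γ(ω t^α) equals z^{αγ-β}/(z^α - ω)^γ for z > 0 with |ω z^{-α}| < 1, where E_{α,β}^γ is the three-parameter Mittag-Leffler function, in the case where γ is a positive integer and the series converges absolutely. -/
open Real Nat MeasureTheory

/-- The three-parameter Mittag-Leffler function
`E_{α,β}^γ(t) = ∑_{r=0}^∞ Γ(γ+r) t^r / (r! Γ(γ) Γ(αr+β))`. -/
noncomputable def mittagLeffler3 (α β γ : ℝ) (t : ℝ) : ℝ :=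
  ∑' r : ℕ, Real.Gamma (γ + r) * t ^ r / (r ! * Real.Gamma γ * Real.Gamma (α * r + β))

lemma aux_integrable {s z : ℝ} (hs : 0 < s) (hz : 0 < z) :
    IntegrableOn (fun t : ℝ => t ^ (s - 1) * Real.exp (-(z * t))) (Set.Ioi 0) := by
  have h1 : IntegrableOn (fun t : ℝ => Real.exp (-(z * t)) * (z * t) ^ (s - 1))
      (Set.Ioi 0) := by
    have := (integrableOn_Ioi_comp_mul_left_iff
      (fun x : ℝ => Real.exp (-x) * x ^ (s - 1)) 0 hz).2
      (by simpa [mul_zero] using Real.GammaIntegral_convergent hs)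
    simpa [mul_zero] using this
  have h2 : IntegrableOn (fun t : ℝ => z ^ (1 - s) *
      (Real.exp (-(z * t)) * (z * t) ^ (s - 1))) (Set.Ioi 0) := h1.const_mul _
  refine h2.congr_fun (fun t ht => ?_) measurableSet_Ioi
  have ht0 : (0:ℝ) < t := ht
  calc z ^ (1 - s) * (Real.exp (-(z * t)) * (z * t) ^ (s - 1))
      = (z ^ (1 - s) * z ^ (s - 1)) * (t ^ (s - 1) * Real.exp (-(z * t))) := by
        rw [Real.mul_rpow hz.le ht0.le]; ring
    _ = t ^ (s - 1) * Real.exp (-(z * t)) := by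
        rw [← Real.rpow_add hz]; norm_num

theorem laplace_mittagLeffler (α β : ℝ) (hα : 0 < α) (hβ : 0 < β)
    (γ : ℕ) (hγ : 1 ≤ γ) (ω : ℝ) (z : ℝ) (hz : 0 < z)
    (hω : |ω * z ^ (-α)| < 1)
    (hsum : ∀ t > (0 : ℝ), Summable fun r : ℕ =>
      |Real.Gamma ((γ : ℝ) + r) * (ω * t ^ α) ^ r /
        (r ! * Real.Gamma (γ : ℝ) * Real.Gamma (α * r + β))|)
    (hint : IntegrableOn
      (fun t : ℝ => Real.exp (-z * t) * t ^ (β - 1) * mittagLeffler3 α β γ (ω * t ^ α))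
      (Set.Ioi 0)) :
    ∫ t in Set.Ioi (0 : ℝ),
        Real.exp (-z * t) * t ^ (β - 1) * mittagLeffler3 α β γ (ω * t ^ α) =
      z ^ (α * γ - β) / (z ^ α - ω) ^ γ := by
  obtain ⟨k, rfl⟩ : ∃ k, γ = k + 1 := ⟨γ - 1, by omega⟩
  set x : ℝ := ω * z ^ (-α) with hx
  -- basic positivity facts
  have hGpos : ∀ r : ℕ, 0 < Real.Gamma (α * r + β) := fun r =>
    Real.Gamma_pos_of_pos (by positivity)
  -- the coefficient identity
  have hcoef : ∀ r : ℕ, Real.Gamma (((k+1 : ℕ) : ℝ) + r) =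
      ((r + k).choose k : ℝ) * r ! * Real.Gamma ((k+1 : ℕ) : ℝ) := by
    intro r
    have h1 : ((k+1 : ℕ) : ℝ) + r = ((k + r : ℕ) : ℝ) + 1 := by push_cast; ring
    rw [h1, Real.Gamma_nat_eq_factorial,
      show ((k+1:ℕ):ℝ) = ((k:ℕ):ℝ) + 1 by push_cast; ring, Real.Gamma_nat_eq_factorial]
    have := Nat.choose_mul_factorial_mul_factorial (Nat.le_add_left k r)
    rw [Nat.add_sub_cancel] at this
    have : ((r + k).choose k * k ! * r ! : ℕ) = ((k + r)! : ℕ) := by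
      rw [this]; ring_nf
    calc ((k + r)! : ℝ) = (((r + k).choose k * k ! * r ! : ℕ) : ℝ) := by rw [this]
      _ = ((r + k).choose k : ℝ) * r ! * k ! := by push_cast; ring
  -- the term functions
  set F : ℕ → ℝ → ℝ := fun r t =>
    (Real.Gamma (((k+1:ℕ) : ℝ) + r) * ω ^ r /
      (r ! * Real.Gamma (((k+1:ℕ)) : ℝ) * Real.Gamma (α * r + β))) *
    (t ^ (α * r + β - 1) * Real.exp (-(z * t))) with hF
  -- each F r is integrable
  have hFint : ∀ r : ℕ, IntegrableOn (F r) (Set.Ioi 0) := fun r =>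
    (aux_integrable (by positivity) hz).const_mul _
  -- value of each integral
  have hFval : ∀ r : ℕ, ∫ t in Set.Ioi (0:ℝ), F r t =
      ((r + k).choose k : ℝ) * x ^ r * z ^ (-β) := by
    intro r
    rw [hF]
    simp only
    rw [MeasureTheory.integral_const_mul, integral_rpow_mul_exp_neg_mul_Ioi (by positivity) hz]
    have hΓγ : Real.Gamma (((k+1:ℕ)) : ℝ) ≠ 0 :=
      (Real.Gamma_pos_of_pos (by positivity)).ne'
    have hr! : (r ! : ℝ) ≠ 0 := Nat.cast_ne_zero.2 (Nat.factorial_ne_zero r)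
    rw [hcoef r]
    have h1 : (1 / z) ^ (α * r + β) = (z ^ (-α)) ^ r * z ^ (-β) := by
      rw [one_div, ← Real.rpow_neg_one z, ← Real.rpow_natCast (z ^ (-α)) r,
        ← Real.rpow_mul hz.le, ← Real.rpow_mul hz.le, ← Real.rpow_add hz]
      ring_nf
    rw [h1]
    field_simp [ (hGpos r).ne']
    rw [hx]
    ring
  -- summability of the norms of the integrals
  have hxlt : |x| < 1 := hω
  have hsum_choose : Summable fun r : ℕ => ((r + k).choose k : ℝ) * |x| ^ r := by
    have := summable_choose_mul_geometric_of_norm_lt_one (R := ℝ) k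
      (r := |x|) (by rwa [Real.norm_eq_abs, abs_abs])
    exact this
  have hFnorm : ∀ r : ℕ, ∫ t in Set.Ioi (0:ℝ), ‖F r t‖ =
      ((r + k).choose k : ℝ) * |x| ^ r * z ^ (-β) := by
    intro r
    have habs : ∀ t ∈ Set.Ioi (0:ℝ), ‖F r t‖ =
        |Real.Gamma (((k+1:ℕ)) : ℝ) + r| * 0 + ‖F r t‖ := by intro t _; ring
    have h2 : ∫ t in Set.Ioi (0:ℝ), ‖F r t‖ =
        |Real.Gamma (((k+1:ℕ) : ℝ) + r) * ω ^ r /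
          (r ! * Real.Gamma (((k+1:ℕ)) : ℝ) * Real.Gamma (α * r + β))| *
        ∫ t in Set.Ioi (0:ℝ), t ^ (α * r + β - 1) * Real.exp (-(z * t)) := by
      rw [← MeasureTheory.integral_const_mul]
      refine setIntegral_congr_fun measurableSet_Ioi (fun t ht => ?_)
      have ht0 : (0:ℝ) < t := ht
      rw [hF]
      simp only [Real.norm_eq_abs, abs_mul,
        abs_of_nonneg (Real.rpow_nonneg ht0.le (α * r + β - 1)),
        abs_of_nonneg (Real.exp_pos (-(z * t))).le]
    rw [h2, integral_rpow_mul_exp_neg_mul_Ioi (by positivity) hz]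
    have hΓγpos : 0 < Real.Gamma (((k+1:ℕ)) : ℝ) :=
      Real.Gamma_pos_of_pos (by positivity)
    have hr!pos : (0:ℝ) < r ! := by exact_mod_cast Nat.factorial_pos r
    rw [hcoef r]
    have h1 : (1 / z) ^ (α * r + β) = (z ^ (-α)) ^ r * z ^ (-β) := by
      rw [one_div, ← Real.rpow_neg_one z, ← Real.rpow_natCast (z ^ (-α)) r,
        ← Real.rpow_mul hz.le, ← Real.rpow_mul hz.le, ← Real.rpow_add hz]
      ring_nf
    rw [h1]
    simp only [abs_div, abs_mul, abs_pow]
    rw [abs_of_nonneg (Nat.cast_nonneg ((r+k).choose k) : (0:ℝ) ≤ _),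
      abs_of_nonneg hr!pos.le, abs_of_nonneg hΓγpos.le,
      abs_of_nonneg (hGpos r).le]
    have hzα : (0:ℝ) < z ^ (-α) := Real.rpow_pos_of_pos hz _
    have : |x| ^ r = |ω| ^ r * (z ^ (-α)) ^ r := by
      rw [hx, abs_mul, mul_pow, abs_of_nonneg hzα.le]
    rw [this]
    field_simp
  have hFsum : Summable fun r : ℕ => ∫ t in Set.Ioi (0:ℝ), ‖F r t‖ := by
    simp only [hFnorm]
    exact hsum_choose.mul_right _
  -- interchange sum and integral
  have hswap : ∑' r : ℕ, ∫ t in Set.Ioi (0:ℝ), F r t =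
      ∫ t in Set.Ioi (0:ℝ), ∑' r : ℕ, F r t :=
    integral_tsum_of_summable_integral_norm hFint hFsum
  -- identify the integrand
  have hident : ∀ t ∈ Set.Ioi (0:ℝ),
      Real.exp (-z * t) * t ^ (β - 1) * mittagLeffler3 α β (k+1 : ℕ) (ω * t ^ α) =
      ∑' r : ℕ, F r t := by
    intro t ht
    have ht0 : (0:ℝ) < t := ht
    rw [mittagLeffler3, ← tsum_mul_left]
    refine tsum_congr (fun r => ?_)
    rw [hF]
    simp only
    have h1 : (ω * t ^ α) ^ r = ω ^ r * t ^ (α * r) := by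
      rw [mul_pow, ← Real.rpow_natCast (t ^ α) r, ← Real.rpow_mul ht0.le]
    have h2 : t ^ (α * r + β - 1) = t ^ (α * r) * t ^ (β - 1) := by
      rw [← Real.rpow_add ht0]; ring_nf
    rw [h1, h2, neg_mul]
    field_simp
  rw [setIntegral_congr_fun measurableSet_Ioi hident, ← hswap]
  -- compute the sum
  have hsum2 : HasSum (fun r : ℕ => ((r + k).choose k : ℝ) * x ^ r * z ^ (-β))
      (1 / (1 - x) ^ (k + 1) * z ^ (-β)) :=
    (hasSum_choose_mul_geometric_of_norm_lt_one k
      (by rwa [Real.norm_eq_abs] : ‖x‖ < 1)).mul_right _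
  have := hsum2.tsum_eq
  simp only [hFval]
  rw [this]
  -- final algebraic identity
  have hzα : (0:ℝ) < z ^ α := Real.rpow_pos_of_pos hz _
  have hcancel : z ^ α * (ω * z ^ (-α)) = ω := by
    rw [mul_comm ω, ← mul_assoc, ← Real.rpow_add hz]
    simp
  have hkey : z ^ α - ω = z ^ α * (1 - x) := by
    rw [hx, mul_sub, mul_one, hcancel]
  have h1x : (0:ℝ) < 1 - x := by
    have := (abs_lt.1 hω).2
    linarith
  have hkey2 : (z ^ α - ω) ^ (k+1) = z ^ (α * ((k+1 : ℕ) : ℝ)) * (1 - x) ^ (k+1) := by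
    rw [hkey, mul_pow, ← Real.rpow_natCast (z ^ α) (k+1), ← Real.rpow_mul hz.le]
  rw [hkey2, Real.rpow_sub hz, Real.rpow_neg hz.le]
  have hzβ : z ^ β ≠ 0 := (Real.rpow_pos_of_pos hz β).ne'
  have hzαγ : z ^ (α * ((k+1 : ℕ) : ℝ)) ≠ 0 := (Real.rpow_pos_of_pos hz _).ne'
  have h1x' : (1 - x) ^ (k+1) ≠ 0 := pow_ne_zero _ h1x.ne'
  field_simp
end

section
/- Let p_n : [0,∞) → [0,1], n ≥ 0, be differentiable functions satisfying p_0' (t) = -λ p_0(t) + kμ p_1(t) and p_n'(t) = -(λ+kμ)p_n(t) + kμ p_{n+1}(t) + λ∑_{m=1}^n c'_m p_{n-m}(t) for n ≥ 1, with ∑_n p_n(t) = 1 and such that M(t) = ∑_n n p_n(t) and M_2(t) = ∑_n n² p_n(t) are finite and termwise differentiable. Then M'(t) = k(λ∑_{i=1}^l i c_i - μ) + kμ p_0(t). -/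
open Real Finset

theorem mean_queue_length_ode
    (l k : ℕ) (hl : 1 ≤ l) (hk : 1 ≤ k)
    (lamV : ℕ → ℝ) (hlamV : ∀ i ∈ Finset.Icc 1 l, 0 < lamV i)
    (lam mu : ℝ) (hlam : lam = ∑ j ∈ Finset.Icc 1 l, lamV j) (hmu : 0 < mu)
    (c : ℕ → ℝ) (hc : ∀ i, c i = lamV i / ∑ j ∈ Finset.Icc 1 l, lamV j)
    (c' : ℕ → ℝ)
    (hc' : ∀ m : ℕ, c' m = if k ∣ m ∧ 1 ≤ m / k ∧ m / k ≤ l then c (m / k) else 0)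
    (p : ℕ → ℝ → ℝ)
    (hrange : ∀ n, ∀ t ≥ (0 : ℝ), p n t ∈ Set.Icc (0 : ℝ) 1)
    (hdiff : ∀ n, Differentiable ℝ (p n))
    (hode0 : ∀ t ≥ (0 : ℝ), deriv (p 0) t = -lam * p 0 t + k * mu * p 1 t)
    (hode : ∀ n ≥ 1, ∀ t ≥ (0 : ℝ),
      deriv (p n) t = -(lam + k * mu) * p n t + k * mu * p (n + 1) t +
        lam * ∑ m ∈ Finset.Icc 1 n, c' m * p (n - m) t)
    (hprob : ∀ t ≥ (0 : ℝ), HasSum (fun n => p n t) 1)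
    (M M2 : ℝ → ℝ)
    (hM : ∀ t ≥ (0 : ℝ), HasSum (fun n : ℕ => (n : ℝ) * p n t) (M t))
    (hM2 : ∀ t ≥ (0 : ℝ), HasSum (fun n : ℕ => (n : ℝ) ^ 2 * p n t) (M2 t))
    (hterm : ∀ t ≥ (0 : ℝ),
      HasDerivAt M (∑' n : ℕ, (n : ℝ) * deriv (p n) t) t) :
    ∀ t ≥ (0 : ℝ),
      deriv M t = k * (lam * ∑ i ∈ Finset.Icc 1 l, (i : ℝ) * c i - mu) +
        k * mu * p 0 t := by
  intro t ht
  have hk0 : 0 < k := hk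
  -- sum of c over Icc 1 l is 1
  have hL : 0 < ∑ j ∈ Finset.Icc 1 l, lamV j :=
    Finset.sum_pos hlamV ⟨1, by simp [hl]⟩
  have hsc : ∑ i ∈ Finset.Icc 1 l, c i = 1 := by
    simp only [hc]
    rw [← Finset.sum_div, div_self hL.ne']
  -- pointwise convolution identity
  have hconv : ∀ n : ℕ, (∑ m ∈ Finset.Icc 1 n, c' m * p (n - m) t) =
      ∑ i ∈ Finset.Icc 1 l, (if i * k ≤ n then c i * p (n - i * k) t else 0) := by
    intro n
    set S := (Finset.Icc 1 l).filter (fun i => i * k ≤ n) with hS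
    have himg : S.image (· * k) ⊆ Finset.Icc 1 n := by
      intro m hm
      simp only [hS, Finset.mem_image, Finset.mem_filter, Finset.mem_Icc] at hm
      obtain ⟨i, ⟨⟨hi1, _⟩, hikn⟩, rfl⟩ := hm
      exact Finset.mem_Icc.mpr ⟨Nat.one_le_iff_ne_zero.mpr (Nat.mul_ne_zero
        (Nat.one_le_iff_ne_zero.mp hi1) (Nat.one_le_iff_ne_zero.mp hk)), hikn⟩
    have h0 : ∀ m ∈ Finset.Icc 1 n, m ∉ S.image (· * k) →
        c' m * p (n - m) t = 0 := by
      intro m hm hnot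
      rw [hc' m]
      rw [if_neg]
      · ring
      · rintro ⟨hdvd, h1, h2⟩
        apply hnot
        refine Finset.mem_image.mpr ⟨m / k, ?_, Nat.div_mul_cancel hdvd⟩
        simp only [hS, Finset.mem_filter, Finset.mem_Icc]
        refine ⟨⟨h1, h2⟩, ?_⟩
        rw [Nat.div_mul_cancel hdvd]
        exact (Finset.mem_Icc.mp hm).2
    have hinj : ∀ a ∈ S, ∀ b ∈ S, a * k = b * k → a = b := by
      intro a _ b _ hab
      exact Nat.eq_of_mul_eq_mul_right hk0 hab
    calc ∑ m ∈ Finset.Icc 1 n, c' m * p (n - m) t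
        = ∑ m ∈ S.image (· * k), c' m * p (n - m) t :=
          (Finset.sum_subset himg h0).symm
      _ = ∑ i ∈ S, c' (i * k) * p (n - i * k) t := Finset.sum_image hinj
      _ = ∑ i ∈ S, c i * p (n - i * k) t := by
          apply Finset.sum_congr rfl
          intro i hi
          simp only [hS, Finset.mem_filter, Finset.mem_Icc] at hi
          rw [hc' (i * k), if_pos, Nat.mul_div_cancel i hk0]
          rw [Nat.mul_div_cancel i hk0]
          exact ⟨⟨i, mul_comm i k⟩, hi.1.1, hi.1.2⟩
      _ = ∑ i ∈ Finset.Icc 1 l, (if i * k ≤ n then c i * p (n - i * k) t else 0) := by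
          rw [hS]; exact Finset.sum_filter _ _
  -- component sums
  have hA : HasSum (fun n : ℕ => (-(lam + k * mu)) * ((n : ℝ) * p n t))
      ((-(lam + k * mu)) * M t) := (hM t ht).mul_left _
  have hshift : HasSum (fun n : ℕ => ((n + 1 : ℕ) : ℝ) * p (n + 1) t) (M t) := by
    apply (hasSum_nat_add_iff (f := fun n : ℕ => (n : ℝ) * p n t) 1).mpr
    simpa using hM t ht
  have hp1 : HasSum (fun n : ℕ => p (n + 1) t) (1 - p 0 t) := by
    apply (hasSum_nat_add_iff (f := fun n : ℕ => p n t) 1).mpr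
    have : 1 - p 0 t + ∑ i ∈ Finset.range 1, p i t = 1 := by simp
    rw [this]
    exact hprob t ht
  have hB : HasSum (fun n : ℕ => (k * mu) * ((n : ℝ) * p (n + 1) t))
      ((k * mu) * (M t - (1 - p 0 t))) := by
    apply HasSum.mul_left
    have := hshift.sub hp1
    convert this using 2 with n
    · rfl
    push_cast
    ring
  have hCi : ∀ i ∈ Finset.Icc 1 l,
      HasSum (fun n : ℕ => (if i * k ≤ n then (n : ℝ) * p (n - i * k) t else 0))
        (M t + (i : ℝ) * k) := by
    intro i _
    have hbase : HasSum (fun j : ℕ => ((j : ℝ) + (i : ℝ) * k) * p j t)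
        (M t + (i : ℝ) * k) := by
      have := (hM t ht).add ((hprob t ht).mul_left ((i : ℝ) * k))
      simp only [mul_one] at this
      convert this using 2 with j
      ring
    have hsh : HasSum (fun n : ℕ =>
        (if i * k ≤ n + i * k then ((n + i * k : ℕ) : ℝ) * p (n + i * k - i * k) t else 0))
        (M t + (i : ℝ) * k) := by
      convert hbase using 2 with n
      rw [if_pos (Nat.le_add_left _ _), Nat.add_sub_cancel]
      push_cast
      ring
    have h2 := (hasSum_nat_add_iff
      (f := fun n : ℕ => (if i * k ≤ n then (n : ℝ) * p (n - i * k) t else 0))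
      (i * k)).mp hsh
    have hz : ∑ n ∈ Finset.range (i * k),
        (if i * k ≤ n then (n : ℝ) * p (n - i * k) t else 0) = 0 :=
      Finset.sum_eq_zero (fun n hn => if_neg (by
        have := Finset.mem_range.mp hn; omega))
    rw [hz, add_zero] at h2
    exact h2
  have hC : HasSum (fun n : ℕ => ∑ i ∈ Finset.Icc 1 l,
      c i * (if i * k ≤ n then (n : ℝ) * p (n - i * k) t else 0))
      (∑ i ∈ Finset.Icc 1 l, c i * (M t + (i : ℝ) * k)) := by
    apply hasSum_sum
    intro i hi
    exact (hCi i hi).mul_left _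
  have hG : HasSum (fun n : ℕ =>
      (-(lam + k * mu)) * ((n : ℝ) * p n t) + (k * mu) * ((n : ℝ) * p (n + 1) t) +
        lam * ∑ i ∈ Finset.Icc 1 l,
          c i * (if i * k ≤ n then (n : ℝ) * p (n - i * k) t else 0))
      ((-(lam + k * mu)) * M t + (k * mu) * (M t - (1 - p 0 t)) +
        lam * ∑ i ∈ Finset.Icc 1 l, c i * (M t + (i : ℝ) * k)) :=
    (hA.add hB).add (hC.mul_left lam)
  -- identify the summand with n * deriv (p n) t
  have hkey : ∀ n : ℕ, (n : ℝ) * deriv (p n) t =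
      (-(lam + k * mu)) * ((n : ℝ) * p n t) + (k * mu) * ((n : ℝ) * p (n + 1) t) +
        lam * ∑ i ∈ Finset.Icc 1 l,
          c i * (if i * k ≤ n then (n : ℝ) * p (n - i * k) t else 0) := by
    intro n
    rcases Nat.eq_zero_or_pos n with rfl | hn
    · have : ∀ i ∈ Finset.Icc 1 l,
          c i * (if i * k ≤ 0 then ((0 : ℕ) : ℝ) * p (0 - i * k) t else 0) = 0 := by
        intro i hi
        rw [if_neg, mul_zero]
        intro h
        have hi1 := (Finset.mem_Icc.mp hi).1
        have : i * k ≠ 0 := Nat.mul_ne_zero (Nat.one_le_iff_ne_zero.mp hi1)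
          (Nat.one_le_iff_ne_zero.mp hk)
        omega
      rw [Finset.sum_eq_zero this]
      simp
    · have hsum_eq : lam * ∑ i ∈ Finset.Icc 1 l,
          c i * (if i * k ≤ n then (n : ℝ) * p (n - i * k) t else 0)
          = (n : ℝ) * (lam * ∑ i ∈ Finset.Icc 1 l,
              (if i * k ≤ n then c i * p (n - i * k) t else 0)) := by
        simp only [Finset.mul_sum]
        apply Finset.sum_congr rfl
        intro i _
        split_ifs with h <;> ring
      rw [hode n hn t ht, hconv n, hsum_eq]
      ring
  have htot : HasSum (fun n : ℕ => (n : ℝ) * deriv (p n) t)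
      ((-(lam + k * mu)) * M t + (k * mu) * (M t - (1 - p 0 t)) +
        lam * ∑ i ∈ Finset.Icc 1 l, c i * (M t + (i : ℝ) * k)) := by
    have := funext hkey
    rw [this]
    exact hG
  have hderiv : deriv M t = ∑' n : ℕ, (n : ℝ) * deriv (p n) t :=
    (hterm t ht).deriv
  rw [hderiv, htot.tsum_eq]
  -- final algebra
  have hsum2 : ∑ i ∈ Finset.Icc 1 l, c i * (M t + (i : ℝ) * k) =
      M t + k * ∑ i ∈ Finset.Icc 1 l, (i : ℝ) * c i := by
    have : ∀ i ∈ Finset.Icc 1 l, c i * (M t + (i : ℝ) * k) =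
        c i * M t + k * ((i : ℝ) * c i) := by
      intro i _
      ring
    rw [Finset.sum_congr rfl this, Finset.sum_add_distrib, ← Finset.sum_mul, hsc,
      ← Finset.mul_sum]
    ring
  rw [hsum2]
  ring
end

section
/- Let θ be the unique root in the closed unit disk of the equation θ = δ + ωφ(θ), where δ = kμ/(λ+kμ+z), ω = λ/(λ+kμ+z) and φ(x) = x∑_{m=1}^l c_m x^{mk}. Then for any positive integer σ, the Lagrange inversion expansion gives θ^σ = δ^σ + σ∑_{n=1}^∞ (λ/kμ)^n ∑_{m_1+...+m_l = n, m_j ≥ 0} (∏_{i=1}^l c_i^{m_i}/m_i!) · (σ+n-1+k∑_j j m_j)!/(σ+k∑_j j m_j)! · δ^{σ+n+k∑_j j m_j}, provided the series converges absolutely. -/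
open Finset Nat

def lagW (l : ℕ) (m : Fin l → ℕ) : ℕ := ∑ j : Fin l, ((j : ℕ) + 1) * m j

noncomputable def lagPr (l : ℕ) (c : ℕ → ℝ) (m : Fin l → ℕ) : ℝ :=
  ∏ i : Fin l, c ((i : ℕ) + 1) ^ m i / (m i)!

noncomputable def lagCoef (k l : ℕ) (c : ℕ → ℝ) (x : ℝ) (σ n : ℕ) : ℝ :=
  if σ = 0 then (if n = 0 then 1 else 0)
  else (σ : ℝ) * ∑ m ∈ Finset.Nat.antidiagonalTuple l n,
    lagPr l c m * ((σ - 1 + n + k * lagW l m)! / ((σ + k * lagW l m)! : ℝ)) *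
      x ^ (σ + n + k * lagW l m)

lemma lagCoef_zero_left (k l : ℕ) (c : ℕ → ℝ) (x : ℝ) (n : ℕ) :
    lagCoef k l c x 0 n = if n = 0 then 1 else 0 := by
  simp [lagCoef]

lemma lagCoef_zero_right (k l : ℕ) (c : ℕ → ℝ) (x : ℝ) (σ : ℕ) :
    lagCoef k l c x σ 0 = x ^ σ := by
  cases σ with
  | zero => simp [lagCoef]
  | succ s =>
    rw [lagCoef, if_neg (Nat.succ_ne_zero s)]
    rw [Finset.Nat.antidiagonalTuple_zero_right, Finset.sum_singleton]
    have hW : lagW l 0 = 0 := by simp [lagW]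
    have hP : lagPr l c 0 = 1 := by simp [lagPr]
    rw [hW, hP]
    have hfac : ((s+1)! : ℝ) = (s+1) * (s)! := by exact_mod_cast Nat.factorial_succ s
    simp only [Nat.add_sub_cancel, Nat.mul_zero, Nat.add_zero]
    rw [hfac]
    have : ((s)! : ℝ) ≠ 0 := by positivity
    field_simp
    push_cast
    ring

lemma lagCoef_eq_succ (k l : ℕ) (c : ℕ → ℝ) (x : ℝ) (σ n : ℕ) :
    lagCoef k l c x σ (n+1) = (σ : ℝ) * ∑ m ∈ Finset.Nat.antidiagonalTuple l (n+1),
      lagPr l c m * ((σ + n + k * lagW l m)! / ((σ + k * lagW l m)! : ℝ)) *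
        x ^ (σ + (n+1) + k * lagW l m) := by
  cases σ with
  | zero => simp [lagCoef]
  | succ s =>
    rw [lagCoef, if_neg (Nat.succ_ne_zero s)]
    have harg : ∀ w : ℕ, s + 1 - 1 + (n + 1) + w = s + 1 + n + w := by intro w; omega
    simp only [harg]

lemma lagCoef_nonneg (k l : ℕ) (c : ℕ → ℝ) (x : ℝ)
    (hc : ∀ i : Fin l, 0 ≤ c ((i : ℕ) + 1)) (hx : 0 ≤ x) (σ n : ℕ) :
    0 ≤ lagCoef k l c x σ n := by
  rw [lagCoef]
  split
  · split <;> norm_num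
  · apply mul_nonneg (Nat.cast_nonneg _)
    apply Finset.sum_nonneg; intro m _
    apply mul_nonneg (mul_nonneg _ _) (pow_nonneg hx _)
    · apply Finset.prod_nonneg; intro i _
      exact div_nonneg (pow_nonneg (hc i) _) (Nat.cast_nonneg _)
    · exact div_nonneg (Nat.cast_nonneg _) (Nat.cast_nonneg _)

lemma lagW_update {l : ℕ} (v : Fin l → ℕ) (j : Fin l) :
    lagW l (Function.update v j (v j + 1)) = lagW l v + ((j : ℕ) + 1) := by
  rw [lagW, lagW, ← Finset.add_sum_erase _ _ (Finset.mem_univ j),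
    ← Finset.add_sum_erase _ _ (Finset.mem_univ j)]
  have h1 : ∑ i ∈ Finset.univ.erase j, ((i:ℕ)+1) * (Function.update v j (v j + 1)) i
      = ∑ i ∈ Finset.univ.erase j, ((i:ℕ)+1) * v i := by
    apply Finset.sum_congr rfl
    intro i hi
    rw [Function.update_of_ne (Finset.ne_of_mem_erase hi)]
  rw [h1, Function.update_self]
  ring

lemma lagPr_update {l : ℕ} (c : ℕ → ℝ) (v : Fin l → ℕ) (j : Fin l) :
    ((v j : ℝ) + 1) * lagPr l c (Function.update v j (v j + 1))
      = c ((j : ℕ) + 1) * lagPr l c v := by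
  rw [lagPr, lagPr, ← Finset.mul_prod_erase _ _ (Finset.mem_univ j),
    ← Finset.mul_prod_erase _ _ (Finset.mem_univ j)]
  have h1 : ∏ i ∈ Finset.univ.erase j,
      c ((i:ℕ)+1) ^ (Function.update v j (v j + 1)) i / ((Function.update v j (v j + 1)) i)!
      = ∏ i ∈ Finset.univ.erase j, c ((i:ℕ)+1) ^ v i / (v i)! := by
    apply Finset.prod_congr rfl
    intro i hi
    rw [Function.update_of_ne (Finset.ne_of_mem_erase hi)]
  rw [h1, Function.update_self]
  have h2 : ((v j + 1)! : ℝ) = (v j + 1) * (v j)! := by exact_mod_cast Nat.factorial_succ (v j)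
  have h3 : ((v j)! : ℝ) ≠ 0 := by positivity
  have h4 : ((v j : ℝ) + 1) ≠ 0 := by positivity
  rw [h2, pow_succ]
  field_simp

lemma sum_fin_split {l : ℕ} (j : Fin l) (g : Fin l → ℕ) :
    ∑ i : Fin l, g i = g j + ∑ i ∈ Finset.univ.erase j, g i :=
  (Finset.add_sum_erase _ _ (Finset.mem_univ j)).symm

lemma lagReindex {l n : ℕ} (j : Fin l) (F : (Fin l → ℕ) → ℝ) :
    ∑ u ∈ Finset.Nat.antidiagonalTuple l (n+1), (u j : ℝ) * F u
      = ∑ v ∈ Finset.Nat.antidiagonalTuple l n,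
          ((v j : ℝ) + 1) * F (Function.update v j (v j + 1)) := by
  rw [← Finset.sum_filter_of_ne (p := fun u => u j ≠ 0)
    (fun u _ h => by
      intro h0
      exact h (by rw [h0]; simp))]
  apply Finset.sum_nbij' (i := fun u => Function.update u j (u j - 1))
    (j := fun v => Function.update v j (v j + 1))
  · intro u hu
    rw [Finset.mem_filter, Finset.Nat.mem_antidiagonalTuple] at hu
    rw [Finset.Nat.mem_antidiagonalTuple]
    rw [sum_fin_split j (fun i => Function.update u j (u j - 1) i)]
    rw [sum_fin_split j u] at hu
    obtain ⟨h1, h2⟩ := hu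
    have h3 : ∑ i ∈ Finset.univ.erase j, Function.update u j (u j - 1) i
        = ∑ i ∈ Finset.univ.erase j, u i := by
      apply Finset.sum_congr rfl
      intro i hi
      rw [Function.update_of_ne (Finset.ne_of_mem_erase hi)]
    rw [h3, Function.update_self]
    omega
  · intro v hv
    rw [Finset.Nat.mem_antidiagonalTuple] at hv
    rw [Finset.mem_filter, Finset.Nat.mem_antidiagonalTuple]
    rw [sum_fin_split j v] at hv
    constructor
    · rw [sum_fin_split j (fun i => Function.update v j (v j + 1) i)]
      have h3 : ∑ i ∈ Finset.univ.erase j, Function.update v j (v j + 1) i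
          = ∑ i ∈ Finset.univ.erase j, v i := by
        apply Finset.sum_congr rfl
        intro i hi
        rw [Function.update_of_ne (Finset.ne_of_mem_erase hi)]
      rw [h3, Function.update_self]
      omega
    · rw [Function.update_self]; omega
  · intro u hu
    rw [Finset.mem_filter] at hu
    rw [Function.update_idem, Function.update_self]
    have : u j - 1 + 1 = u j := by omega
    rw [this, Function.update_eq_self]
  · intro v _
    rw [Function.update_idem, Function.update_self, Nat.add_sub_cancel,
      Function.update_eq_self]
  · intro u hu
    rw [Finset.mem_filter] at hu
    rw [Function.update_self]
    have h1 : u j - 1 + 1 = u j := by omega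
    have h2 : ((u j - 1 : ℕ) : ℝ) + 1 = (u j : ℝ) := by
      have h := hu.2
      have : ((u j - 1 : ℕ) : ℝ) = (u j : ℝ) - 1 := by
        rw [Nat.cast_sub (Nat.one_le_iff_ne_zero.mpr h)]; norm_num
      rw [this]; ring
    rw [Function.update_idem, h1, Function.update_eq_self, h2]

lemma lagCoef_rec (k l : ℕ) (c : ℕ → ℝ) (x : ℝ) (σ n : ℕ) :
    lagCoef k l c x (σ+1) (n+1) =
      x * lagCoef k l c x σ (n+1)
        + x * ∑ j : Fin l, c ((j : ℕ) + 1) * lagCoef k l c x (σ+1+((j : ℕ)+1)*k) n := by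
  have hA : x * lagCoef k l c x σ (n+1)
      = ∑ u ∈ Finset.Nat.antidiagonalTuple l (n+1),
          lagPr l c u * (((σ:ℝ) * ((σ:ℝ)+1+(k * lagW l u : ℕ)))
            * (((σ + n + k * lagW l u)! : ℝ) / ((σ + 1 + k * lagW l u)! : ℝ)))
            * x ^ (σ + 1 + (n+1) + k * lagW l u) := by
    rw [lagCoef_eq_succ, mul_comm x, mul_assoc, Finset.sum_mul, Finset.mul_sum]
    apply Finset.sum_congr rfl
    intro u _
    set w : ℕ := k * lagW l u with hw
    have hfac : ((σ + 1 + w)! : ℝ) = ((σ + 1 + w : ℕ) : ℝ) * ((σ + w)! : ℝ) := by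
      rw [show σ + 1 + w = (σ + w) + 1 by omega]
      exact_mod_cast Nat.factorial_succ (σ + w)
    have hpow : x ^ (σ + 1 + (n+1) + w) = x ^ (σ + (n+1) + w) * x := by
      rw [← pow_succ]
      congr 1
      omega
    have h1 : ((σ + w)! : ℝ) ≠ 0 := by positivity
    have h2 : ((σ + 1 + w : ℕ) : ℝ) ≠ 0 := by positivity
    rw [hfac, hpow]
    push_cast
    field_simp
  have hB : x * ∑ j : Fin l, c ((j : ℕ) + 1) * lagCoef k l c x (σ+1+((j : ℕ)+1)*k) n
      = ∑ u ∈ Finset.Nat.antidiagonalTuple l (n+1),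
          lagPr l c u * ((∑ j : Fin l, (u j : ℝ) * ((σ:ℝ)+1+((j:ℕ)+1)*(k:ℝ)))
            * (((σ + n + k * lagW l u)! : ℝ) / ((σ + 1 + k * lagW l u)! : ℝ)))
            * x ^ (σ + 1 + (n+1) + k * lagW l u) := by
    have hRHS : ∑ u ∈ Finset.Nat.antidiagonalTuple l (n+1),
          lagPr l c u * ((∑ j : Fin l, (u j : ℝ) * ((σ:ℝ)+1+((j:ℕ)+1)*(k:ℝ)))
            * (((σ + n + k * lagW l u)! : ℝ) / ((σ + 1 + k * lagW l u)! : ℝ)))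
            * x ^ (σ + 1 + (n+1) + k * lagW l u)
        = ∑ j : Fin l, ∑ u ∈ Finset.Nat.antidiagonalTuple l (n+1),
            (u j : ℝ) * (((σ:ℝ)+1+((j:ℕ)+1)*(k:ℝ)) * lagPr l c u
              * (((σ + n + k * lagW l u)! : ℝ) / ((σ + 1 + k * lagW l u)! : ℝ))
              * x ^ (σ + 1 + (n+1) + k * lagW l u)) := by
      rw [Finset.sum_comm]
      apply Finset.sum_congr rfl
      intro u _
      rw [Finset.sum_mul, Finset.mul_sum, Finset.sum_mul]
      apply Finset.sum_congr rfl
      intro j _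
      ring
    rw [hRHS]
    rw [Finset.mul_sum]
    apply Finset.sum_congr rfl
    intro j _
    rw [lagReindex j]
    have hne : σ + 1 + ((j : ℕ)+1)*k ≠ 0 := by positivity
    rw [lagCoef, if_neg hne, Finset.mul_sum, Finset.mul_sum, Finset.mul_sum]
    apply Finset.sum_congr rfl
    intro v _
    rw [lagW_update]
    set J : ℕ := ((j : ℕ)+1)*k with hJ
    set W : ℕ := lagW l v with hW
    have hkW : k * (W + ((j:ℕ)+1)) = k * W + J := by rw [hJ]; ring
    rw [hkW]
    have hsub : σ + 1 + J - 1 = σ + J := by omega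
    rw [hsub]
    have harg1 : σ + n + (k * W + J) = σ + J + n + k * W := by omega
    have harg2 : σ + 1 + (k * W + J) = σ + 1 + J + k * W := by omega
    rw [harg1, harg2]
    have hpow : x ^ (σ + 1 + (n+1) + (k * W + J)) = x ^ (σ + 1 + J + n + k * W) * x := by
      rw [← pow_succ]
      congr 1
      omega
    rw [hpow]
    have hprupd : ((v j : ℝ) + 1) * lagPr l c (Function.update v j (v j + 1))
        = c ((j : ℕ) + 1) * lagPr l c v := lagPr_update c v j
    have hcast : ((σ + 1 + J : ℕ) : ℝ) = (σ:ℝ) + 1 + ((j:ℕ)+1)*(k:ℝ) := by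
      rw [hJ]; push_cast; ring
    symm
    calc ((v j : ℝ) + 1) * (((σ:ℝ)+1+((j:ℕ)+1)*(k:ℝ)) * lagPr l c (Function.update v j (v j + 1))
          * (((σ + J + n + k * W)! : ℝ) / ((σ + 1 + J + k * W)! : ℝ))
          * (x ^ (σ + 1 + J + n + k * W) * x))
        = (((v j : ℝ) + 1) * lagPr l c (Function.update v j (v j + 1)))
            * (((σ:ℝ)+1+((j:ℕ)+1)*(k:ℝ))
            * (((σ + J + n + k * W)! : ℝ) / ((σ + 1 + J + k * W)! : ℝ))
            * (x ^ (σ + 1 + J + n + k * W) * x)) := by ring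
      _ = x * (c ((j : ℕ) + 1) * (((σ + 1 + J : ℕ) : ℝ) * (lagPr l c v
            * (((σ + J + n + k * W)! : ℝ) / ((σ + 1 + J + k * W)! : ℝ))
            * x ^ (σ + 1 + J + n + k * W)))) := by
          rw [hprupd, hcast]
          ring
  -- now combine
  rw [hA, hB, ← Finset.sum_add_distrib, lagCoef_eq_succ]
  rw [Finset.mul_sum]
  apply Finset.sum_congr rfl
  intro u hu
  rw [Finset.Nat.mem_antidiagonalTuple] at hu
  have hsumj : ∑ j : Fin l, (u j : ℝ) * ((σ:ℝ)+1+((j:ℕ)+1)*(k:ℝ))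
      = ((σ:ℝ)+1) * ((n : ℝ)+1) + (k:ℝ) * (lagW l u : ℝ) := by
    have h1 : ∑ j : Fin l, (u j : ℝ) * ((σ:ℝ)+1+((j:ℕ)+1)*(k:ℝ))
        = ((σ:ℝ)+1) * (∑ j : Fin l, (u j : ℝ))
          + (k:ℝ) * (∑ j : Fin l, (((j:ℕ):ℝ)+1) * (u j : ℝ)) := by
      rw [Finset.mul_sum, Finset.mul_sum, ← Finset.sum_add_distrib]
      apply Finset.sum_congr rfl
      intro j _
      ring
    have h2 : (∑ j : Fin l, (u j : ℝ)) = ((n : ℝ)+1) := by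
      rw [← Nat.cast_sum, hu]
      push_cast
      ring
    have h3 : (∑ j : Fin l, (((j:ℕ):ℝ)+1) * (u j : ℝ)) = ((lagW l u : ℕ) : ℝ) := by
      rw [lagW, Nat.cast_sum]
      apply Finset.sum_congr rfl
      intro j _
      push_cast
      ring
    rw [h1, h2, h3]
  rw [hsumj]
  set w : ℕ := k * lagW l u with hw
  have hfac1 : ((σ + 1 + n + w)! : ℝ) = ((σ + n + w : ℕ) + 1 : ℝ) * ((σ + n + w)! : ℝ) := by
    rw [show σ + 1 + n + w = (σ + n + w) + 1 by omega]
    exact_mod_cast Nat.factorial_succ (σ + n + w)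
  have hkw : (k:ℝ) * (lagW l u : ℝ) = (w : ℕ) := by rw [hw]; push_cast; ring
  rw [hfac1, hkw]
  push_cast
  ring

lemma lagCoef_conv (k l : ℕ) (c : ℕ → ℝ) (x : ℝ) :
    ∀ n σ τ : ℕ, lagCoef k l c x (σ+τ) n
      = ∑ p ∈ Finset.range (n+1), lagCoef k l c x σ p * lagCoef k l c x τ (n-p) := by
  intro n
  induction n with
  | zero =>
    intro σ τ
    simp [lagCoef_zero_right, pow_add]
  | succ n ihn =>
    intro σ τ
    induction τ with
    | zero =>
      rw [Nat.add_zero, Finset.sum_eq_single (n+1)]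
      · rw [Nat.sub_self, lagCoef_zero_left, if_pos rfl, mul_one]
      · intro b hb hbne
        rw [Finset.mem_range] at hb
        rw [lagCoef_zero_left, if_neg (by omega), mul_zero]
      · intro h
        exact absurd (Finset.self_mem_range_succ (n+1)) h
    | succ τ ihτ =>
      have hL : lagCoef k l c x (σ+(τ+1)) (n+1)
          = x * lagCoef k l c x (σ+τ) (n+1)
            + x * ∑ j : Fin l, c ((j:ℕ)+1) * lagCoef k l c x (σ+τ+1+((j:ℕ)+1)*k) n :=
        lagCoef_rec k l c x (σ+τ) n
      rw [hL, ihτ]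
      have hj : (∑ j : Fin l, c ((j:ℕ)+1) * lagCoef k l c x (σ+τ+1+((j:ℕ)+1)*k) n)
          = ∑ j : Fin l, c ((j:ℕ)+1) * ∑ p ∈ Finset.range (n+1),
              lagCoef k l c x σ p * lagCoef k l c x (τ+1+((j:ℕ)+1)*k) (n-p) := by
        apply Finset.sum_congr rfl
        intro j _
        rw [show σ+τ+1+((j:ℕ)+1)*k = σ + (τ+1+((j:ℕ)+1)*k) by ring, ihn]
      rw [hj]
      have hA : ∑ p ∈ Finset.range (n+1+1), lagCoef k l c x σ p * lagCoef k l c x τ (n+1-p)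
          = (∑ p ∈ Finset.range (n+1), lagCoef k l c x σ p * lagCoef k l c x τ ((n-p)+1))
            + lagCoef k l c x σ (n+1) * x ^ τ := by
        rw [Finset.sum_range_succ]
        congr 1
        · apply Finset.sum_congr rfl
          intro p hp
          rw [Finset.mem_range] at hp
          rw [show n+1-p = (n-p)+1 by omega]
        · rw [Nat.sub_self, lagCoef_zero_right]
      rw [hA]
      have hR : ∑ p ∈ Finset.range (n+1+1), lagCoef k l c x σ p * lagCoef k l c x (τ+1) (n+1-p)
          = ((x * ∑ p ∈ Finset.range (n+1), lagCoef k l c x σ p * lagCoef k l c x τ ((n-p)+1))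
            + (x * ∑ j : Fin l, c ((j:ℕ)+1) * ∑ p ∈ Finset.range (n+1),
                lagCoef k l c x σ p * lagCoef k l c x (τ+1+((j:ℕ)+1)*k) (n-p)))
            + lagCoef k l c x σ (n+1) * x ^ (τ+1) := by
        rw [Finset.sum_range_succ, Nat.sub_self, lagCoef_zero_right]
        have h2 : ∀ p ∈ Finset.range (n+1),
            lagCoef k l c x σ p * lagCoef k l c x (τ+1) (n+1-p)
            = x * (lagCoef k l c x σ p * lagCoef k l c x τ ((n-p)+1))
              + ∑ j : Fin l, c ((j:ℕ)+1)
                  * (x * (lagCoef k l c x σ p * lagCoef k l c x (τ+1+((j:ℕ)+1)*k) (n-p))) := by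
          intro p hp
          rw [Finset.mem_range] at hp
          rw [show n+1-p = (n-p)+1 by omega, lagCoef_rec k l c x τ (n-p)]
          rw [mul_add, Finset.mul_sum, Finset.mul_sum]
          congr 1
          · ring
          · apply Finset.sum_congr rfl
            intro j _
            ring
        rw [Finset.sum_congr rfl h2, Finset.sum_add_distrib, Finset.mul_sum]
        congr 1
        rw [Finset.sum_comm, Finset.mul_sum]
        congr 1
        apply Finset.sum_congr rfl
        intro j _
        rw [Finset.mul_sum, Finset.mul_sum]
        apply Finset.sum_congr rfl
        intro p _
        ring
      rw [hR]
      ring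

theorem lagrange_expansion
    (lam mu z : ℝ) (hlam : 0 < lam) (hmu : 0 < mu) (hz : 0 < z)
    (k l sigma : ℕ) (hk : 1 ≤ k) (hl : 1 ≤ l) (hsigma : 1 ≤ sigma)
    (c : ℕ → ℝ) (hc : ∀ m ∈ Finset.Icc 1 l, 0 ≤ c m)
    (hcsum : ∑ m ∈ Finset.Icc 1 l, c m = 1)
    (delta omega : ℝ)
    (hdelta : delta = k * mu / (lam + k * mu + z))
    (homega : omega = lam / (lam + k * mu + z))
    (phi : ℝ → ℝ) (hphi : ∀ x, phi x = x * ∑ m ∈ Finset.Icc 1 l, c m * x ^ (m * k))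
    (theta : ℝ) (htheta : |theta| ≤ 1 ∧ theta = delta + omega * phi theta)
    (huniq : ∀ t : ℝ, |t| ≤ 1 → t = delta + omega * phi t → t = theta)
    (hconv : Summable fun n : ℕ =>
      |(lam / (k * mu)) ^ (n + 1) *
        ∑ m ∈ Finset.Nat.antidiagonalTuple l (n + 1),
          (∏ i : Fin l, c (i + 1) ^ m i / (m i)!) *
            ((sigma + n + k * ∑ j : Fin l, ((j : ℕ) + 1) * m j)! /
              ((sigma + k * ∑ j : Fin l, ((j : ℕ) + 1) * m j)! : ℝ)) *
            delta ^ (sigma + n + 1 + k * ∑ j : Fin l, ((j : ℕ) + 1) * m j)|) :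
    theta ^ sigma = delta ^ sigma +
      sigma * ∑' n : ℕ,
        (lam / (k * mu)) ^ (n + 1) *
          ∑ m ∈ Finset.Nat.antidiagonalTuple l (n + 1),
            (∏ i : Fin l, c (i + 1) ^ m i / (m i)!) *
              ((sigma + n + k * ∑ j : Fin l, ((j : ℕ) + 1) * m j)! /
                ((sigma + k * ∑ j : Fin l, ((j : ℕ) + 1) * m j)! : ℝ)) *
              delta ^ (sigma + n + 1 + k * ∑ j : Fin l, ((j : ℕ) + 1) * m j) := by
  obtain ⟨hθabs, hθeq⟩ := htheta
  have hkR : (1:ℝ) ≤ (k:ℝ) := by exact_mod_cast hk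
  have hkmu : (0:ℝ) < (k:ℝ) * mu := mul_pos (lt_of_lt_of_le one_pos hkR) hmu
  have hD : 0 < lam + (k:ℝ) * mu + z := by linarith
  have hδpos : 0 < delta := by rw [hdelta]; exact div_pos hkmu hD
  have hωpos : 0 < omega := by rw [homega]; exact div_pos hlam hD
  have hω1 : omega < 1 := by
    rw [homega, div_lt_one hD]; linarith
  set a : ℝ := lam / ((k:ℝ) * mu) with ha
  have hapos : 0 < a := div_pos hlam hkmu
  have haδ : a * delta = omega := by
    rw [ha, hdelta, homega]
    field_simp
  -- reindexing Icc 1 l to Fin l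
  have hIcc : ∀ (f : ℕ → ℝ), ∑ m ∈ Finset.Icc 1 l, f m = ∑ j : Fin l, f ((j:ℕ)+1) := by
    intro f
    exact Finset.sum_bij'
      (fun m hm => (⟨m - 1, by have := Finset.mem_Icc.mp hm; omega⟩ : Fin l))
      (fun j _ => (j:ℕ)+1)
      (fun m hm => Finset.mem_univ _)
      (fun j _ => Finset.mem_Icc.mpr ⟨Nat.le_add_left 1 _, Nat.succ_le_of_lt j.isLt⟩)
      (fun m hm => by have := Finset.mem_Icc.mp hm; show m - 1 + 1 = m; omega)
      (fun j _ => Fin.ext (by simp))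
      (fun m hm => by
        have := Finset.mem_Icc.mp hm
        congr 1
        show m = m - 1 + 1
        omega)
  -- facts about theta
  have hθ1 : theta ≤ 1 := (abs_le.mp hθabs).2
  have hcnn : ∀ j : Fin l, 0 ≤ c ((j:ℕ)+1) := by
    intro j
    exact hc _ (Finset.mem_Icc.mpr ⟨Nat.le_add_left 1 _, Nat.succ_le_of_lt j.isLt⟩)
  have hψabs : |∑ m ∈ Finset.Icc 1 l, c m * theta ^ (m*k)| ≤ 1 := by
    calc |∑ m ∈ Finset.Icc 1 l, c m * theta ^ (m*k)|
        ≤ ∑ m ∈ Finset.Icc 1 l, |c m * theta ^ (m*k)| := Finset.abs_sum_le_sum_abs _ _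
      _ ≤ ∑ m ∈ Finset.Icc 1 l, c m := by
          apply Finset.sum_le_sum
          intro m hm
          rw [abs_mul, abs_of_nonneg (hc m hm), abs_pow]
          calc c m * |theta| ^ (m*k) ≤ c m * 1 := by
                apply mul_le_mul_of_nonneg_left _ (hc m hm)
                exact pow_le_one₀ (abs_nonneg theta) hθabs
            _ = c m := mul_one _
      _ = 1 := hcsum
  have hθeq' : theta = delta + omega * (theta * ∑ m ∈ Finset.Icc 1 l, c m * theta ^ (m*k)) := by
    rw [hphi theta] at hθeq
    exact hθeq
  have hθpos : 0 < theta := by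
    set ψ := ∑ m ∈ Finset.Icc 1 l, c m * theta ^ (m*k) with hψ
    have h1 : theta * (1 - omega * ψ) = delta := by
      rw [hψ]
      linear_combination hθeq'
    have h2 : 0 < 1 - omega * ψ := by
      have : omega * ψ ≤ |omega * ψ| := le_abs_self _
      have h3 : |omega * ψ| = omega * |ψ| := by rw [abs_mul, abs_of_nonneg hωpos.le]
      nlinarith [abs_nonneg ψ]
    nlinarith
  have hψnn : 0 ≤ ∑ m ∈ Finset.Icc 1 l, c m * theta ^ (m*k) := by
    apply Finset.sum_nonneg
    intro m hm
    exact mul_nonneg (hc m hm) (pow_nonneg hθpos.le _)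
  have hθδ : delta ≤ theta := by
    have h5 : 0 ≤ omega * (theta * ∑ m ∈ Finset.Icc 1 l, c m * theta ^ (m*k)) :=
      mul_nonneg hωpos.le (mul_nonneg hθpos.le hψnn)
    linarith [hθeq']
  -- the key fixed point identity in Fin l form
  have hkey : ∀ σ' : ℕ, delta * theta ^ σ'
      + (a * delta) * ∑ j : Fin l, c ((j:ℕ)+1) * theta ^ (σ'+1+((j:ℕ)+1)*k) = theta ^ (σ'+1) := by
    intro σ'
    have h1 : ∑ j : Fin l, c ((j:ℕ)+1) * theta ^ (σ'+1+((j:ℕ)+1)*k)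
        = theta ^ σ' * (theta * ∑ j : Fin l, c ((j:ℕ)+1) * theta ^ (((j:ℕ)+1)*k)) := by
      rw [Finset.mul_sum, Finset.mul_sum]
      apply Finset.sum_congr rfl
      intro j _
      rw [pow_add, pow_add, pow_one]
      ring
    rw [h1, haδ, ← hIcc (fun m => c m * theta ^ (m*k))]
    have h2 : omega * (theta * ∑ m ∈ Finset.Icc 1 l, c m * theta ^ (m*k)) = theta - delta := by
      linarith [hθeq']
    calc delta * theta ^ σ'
          + omega * (theta ^ σ' * (theta * ∑ m ∈ Finset.Icc 1 l, c m * theta ^ (m*k)))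
        = delta * theta ^ σ'
          + theta ^ σ' * (omega * (theta * ∑ m ∈ Finset.Icc 1 l, c m * theta ^ (m*k))) := by ring
      _ = theta ^ (σ'+1) := by rw [h2, pow_succ]; ring
  -- nonnegativity of coefficients
  have hgnn : ∀ σ' n, 0 ≤ lagCoef k l c delta σ' n * a ^ n := fun σ' n =>
    mul_nonneg (lagCoef_nonneg k l c delta hcnn hδpos.le σ' n) (pow_nonneg hapos.le n)
  -- the recursion for terms
  have hgrec : ∀ σ' n, lagCoef k l c delta (σ'+1) (n+1) * a ^ (n+1)
      = delta * (lagCoef k l c delta σ' (n+1) * a ^ (n+1))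
        + (a * delta) * ∑ j : Fin l, c ((j:ℕ)+1) * (lagCoef k l c delta (σ'+1+((j:ℕ)+1)*k) n * a ^ n) := by
    intro σ' n
    rw [lagCoef_rec k l c delta σ' n, add_mul]
    congr 1
    · ring
    · rw [Finset.mul_sum, Finset.sum_mul, Finset.mul_sum]
      apply Finset.sum_congr rfl
      intro j _
      rw [pow_succ]
      ring
  -- partial sums bounded by theta ^ σ'
  have hPB : ∀ N σ', ∑ n ∈ Finset.range N, lagCoef k l c delta σ' n * a ^ n ≤ theta ^ σ' := by
    intro N
    induction N with
    | zero => intro σ'; simp [pow_nonneg hθpos.le]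
    | succ N ihN =>
      intro σ'
      induction σ' with
      | zero =>
        have h0 : ∀ n, lagCoef k l c delta 0 n * a ^ n = if n = 0 then 1 else 0 := by
          intro n
          rw [lagCoef_zero_left]
          split <;> rename_i h
          · rw [h]; norm_num
          · norm_num
        rw [Finset.sum_congr rfl fun n _ => h0 n, Finset.sum_ite_eq' (Finset.range (N+1)) 0 fun _ => (1:ℝ)]
        simp
      | succ σ' ihσ =>
        rw [Finset.sum_range_succ']
        rw [Finset.sum_congr rfl fun i _ => hgrec σ' i, Finset.sum_add_distrib]
        have hz0 : lagCoef k l c delta (σ'+1) 0 * a ^ 0 = delta ^ (σ'+1) := by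
          rw [lagCoef_zero_right, pow_zero, mul_one]
        rw [hz0]
        have h1 : ∑ i ∈ Finset.range N, delta * (lagCoef k l c delta σ' (i+1) * a ^ (i+1))
            = delta * ((∑ n ∈ Finset.range (N+1), lagCoef k l c delta σ' n * a ^ n) - delta ^ σ') := by
          rw [Finset.sum_range_succ']
          rw [lagCoef_zero_right, pow_zero, mul_one, ← Finset.mul_sum]
          ring
        have h2 : ∑ i ∈ Finset.range N, (a * delta)
              * ∑ j : Fin l, c ((j:ℕ)+1) * (lagCoef k l c delta (σ'+1+((j:ℕ)+1)*k) i * a ^ i)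
            = (a * delta) * ∑ j : Fin l, c ((j:ℕ)+1)
              * ∑ i ∈ Finset.range N, lagCoef k l c delta (σ'+1+((j:ℕ)+1)*k) i * a ^ i := by
          rw [← Finset.mul_sum, Finset.sum_comm]
          congr 1
          apply Finset.sum_congr rfl
          intro j _
          rw [Finset.mul_sum]
        rw [h1, h2]
        have h3 : (a * delta) * ∑ j : Fin l, c ((j:ℕ)+1)
              * ∑ i ∈ Finset.range N, lagCoef k l c delta (σ'+1+((j:ℕ)+1)*k) i * a ^ i
            ≤ (a * delta) * ∑ j : Fin l, c ((j:ℕ)+1) * theta ^ (σ'+1+((j:ℕ)+1)*k) := by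
          apply mul_le_mul_of_nonneg_left _ (mul_nonneg hapos.le hδpos.le)
          apply Finset.sum_le_sum
          intro j _
          exact mul_le_mul_of_nonneg_left (ihN _) (hcnn j)
        have h4 : delta * ((∑ n ∈ Finset.range (N+1), lagCoef k l c delta σ' n * a ^ n) - delta ^ σ')
            ≤ delta * (theta ^ σ' - delta ^ σ') := by
          apply mul_le_mul_of_nonneg_left _ hδpos.le
          have := ihσ
          linarith
        have hp : delta ^ (σ'+1) = delta * delta ^ σ' := by rw [pow_succ]; ring
        have hk2 := hkey σ'
        linarith [h3, h4]
  -- summability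
  have hgsum : ∀ σ', Summable (fun n => lagCoef k l c delta σ' n * a ^ n) := fun σ' =>
    summable_of_sum_range_le (fun n => hgnn σ' n) (fun N => hPB N σ')
  have hTnn : ∀ σ', 0 ≤ ∑' n, lagCoef k l c delta σ' n * a ^ n := fun σ' =>
    tsum_nonneg (hgnn σ')
  have hTle : ∀ σ', (∑' n, lagCoef k l c delta σ' n * a ^ n) ≤ theta ^ σ' := fun σ' =>
    Real.tsum_le_of_sum_range_le (hgnn σ') (fun N => hPB N σ')
  have hT0 : (∑' n, lagCoef k l c delta 0 n * a ^ n) = 1 := by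
    have h0 : ∀ n : ℕ, lagCoef k l c delta 0 n * a ^ n = if n = 0 then 1 else 0 := by
      intro n
      rw [lagCoef_zero_left]
      split <;> rename_i h
      · rw [h]; norm_num
      · norm_num
    rw [tsum_congr h0]
    exact tsum_ite_eq 0 1
  have hnorm : ∀ σ', Summable (fun n => ‖lagCoef k l c delta σ' n * a ^ n‖) := by
    intro σ'
    apply Summable.congr (hgsum σ')
    intro n
    exact (Real.norm_of_nonneg (hgnn σ' n)).symm
  have hTconv : ∀ σ' τ' : ℕ, (∑' n, lagCoef k l c delta (σ'+τ') n * a ^ n)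
      = (∑' n, lagCoef k l c delta σ' n * a ^ n) * (∑' n, lagCoef k l c delta τ' n * a ^ n) := by
    intro σ' τ'
    have h1 : ∀ n : ℕ, lagCoef k l c delta (σ'+τ') n * a ^ n
        = ∑ p ∈ Finset.range (n+1),
            (lagCoef k l c delta σ' p * a ^ p) * (lagCoef k l c delta τ' (n-p) * a ^ (n-p)) := by
      intro n
      rw [lagCoef_conv k l c delta n σ' τ', Finset.sum_mul]
      apply Finset.sum_congr rfl
      intro p hp
      rw [Finset.mem_range] at hp
      have h2 : a ^ n = a ^ p * a ^ (n - p) := by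
        rw [← pow_add]
        congr 1
        omega
      rw [h2]
      ring
    rw [tsum_congr h1]
    exact (tsum_mul_tsum_eq_tsum_sum_range_of_summable_norm (hnorm σ') (hnorm τ')).symm
  have hTpow : ∀ σ', (∑' n, lagCoef k l c delta σ' n * a ^ n)
      = (∑' n, lagCoef k l c delta 1 n * a ^ n) ^ σ' := by
    intro σ'
    induction σ' with
    | zero => rw [pow_zero]; exact hT0
    | succ σ' ih => rw [hTconv σ' 1, ih, pow_succ]
  have hT1eq : (∑' n, lagCoef k l c delta 1 n * a ^ n)
      = delta + omega * phi (∑' n, lagCoef k l c delta 1 n * a ^ n) := by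
    have hg10 : lagCoef k l c delta 1 0 * a ^ 0 = delta := by
      rw [lagCoef_zero_right, pow_zero, pow_one, mul_one]
    have h2 : ∀ n : ℕ, lagCoef k l c delta 1 (n+1) * a ^ (n+1)
        = ∑ j : Fin l, (a*delta) * (c ((j:ℕ)+1) * (lagCoef k l c delta (1+((j:ℕ)+1)*k) n * a ^ n)) := by
      intro n
      have h3 := hgrec 0 n
      rw [lagCoef_zero_left, if_neg (Nat.succ_ne_zero n)] at h3
      simp only [zero_add, zero_mul, mul_zero] at h3
      rw [h3, Finset.mul_sum]
    have h4 : ∀ j : Fin l,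
        (∑' n, (a*delta) * (c ((j:ℕ)+1) * (lagCoef k l c delta (1+((j:ℕ)+1)*k) n * a ^ n)))
        = (a*delta) * (c ((j:ℕ)+1) * (∑' n, lagCoef k l c delta (1+((j:ℕ)+1)*k) n * a ^ n)) := by
      intro j
      rw [tsum_mul_left, tsum_mul_left]
    have hsplit : (∑' n, lagCoef k l c delta 1 n * a ^ n)
        = delta + ∑ j : Fin l, (a*delta)
            * (c ((j:ℕ)+1) * (∑' n, lagCoef k l c delta (1+((j:ℕ)+1)*k) n * a ^ n)) := by
      rw [Summable.tsum_eq_zero_add (hgsum 1), hg10]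
      congr 1
      rw [tsum_congr h2, Summable.tsum_finsetSum (fun j _ => (((hgsum _).mul_left _).mul_left _))]
      exact Finset.sum_congr rfl (fun j _ => h4 j)
    have hphiT : delta + omega * phi (∑' n, lagCoef k l c delta 1 n * a ^ n)
        = delta + ∑ j : Fin l, (a*delta)
            * (c ((j:ℕ)+1) * (∑' n, lagCoef k l c delta (1+((j:ℕ)+1)*k) n * a ^ n)) := by
      congr 1
      rw [hphi, hIcc (fun m => c m * (∑' n, lagCoef k l c delta 1 n * a ^ n) ^ (m*k)), ← haδ]
      have h5 : ∀ j : Fin l, (∑' n, lagCoef k l c delta (1+((j:ℕ)+1)*k) n * a ^ n)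
          = (∑' n, lagCoef k l c delta 1 n * a ^ n) ^ (1+((j:ℕ)+1)*k) := fun j => hTpow _
      have h7 : (∑ j : Fin l, (a*delta)
            * (c ((j:ℕ)+1) * (∑' n, lagCoef k l c delta (1+((j:ℕ)+1)*k) n * a ^ n)))
          = ∑ j : Fin l, (a*delta) * (c ((j:ℕ)+1)
            * (∑' n, lagCoef k l c delta 1 n * a ^ n) ^ (1+((j:ℕ)+1)*k)) :=
        Finset.sum_congr rfl (fun j _ => by rw [h5 j])
      rw [h7, Finset.mul_sum, Finset.mul_sum]
      apply Finset.sum_congr rfl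
      intro j _
      rw [pow_add, pow_one]
      ring
    exact hsplit.trans hphiT.symm
  have hT1abs : |∑' n, lagCoef k l c delta 1 n * a ^ n| ≤ 1 := by
    rw [abs_of_nonneg (hTnn 1)]
    have h6 := hTle 1
    rw [pow_one] at h6
    linarith
  have hT1θ : (∑' n, lagCoef k l c delta 1 n * a ^ n) = theta := huniq _ hT1abs hT1eq
  have hfin : ∀ n : ℕ, lagCoef k l c delta sigma (n+1) * a ^ (n+1)
      = (sigma:ℝ) * (a ^ (n+1) * ∑ m ∈ Finset.Nat.antidiagonalTuple l (n+1),
          (∏ i : Fin l, c ((i:ℕ) + 1) ^ m i / (m i)!) *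
            ((sigma + n + k * ∑ j : Fin l, ((j : ℕ) + 1) * m j)! /
              ((sigma + k * ∑ j : Fin l, ((j : ℕ) + 1) * m j)! : ℝ)) *
            delta ^ (sigma + n + 1 + k * ∑ j : Fin l, ((j : ℕ) + 1) * m j)) := by
    intro n
    rw [lagCoef_eq_succ]
    have hexp : ∀ w, sigma + (n+1) + w = sigma + n + 1 + w := by intro w; omega
    simp only [lagPr, lagW, hexp]
    ring
  calc theta ^ sigma = (∑' n, lagCoef k l c delta 1 n * a ^ n) ^ sigma := by rw [hT1θ]
    _ = ∑' n, lagCoef k l c delta sigma n * a ^ n := (hTpow sigma).symm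
    _ = lagCoef k l c delta sigma 0 * a ^ 0
        + ∑' n, lagCoef k l c delta sigma (n+1) * a ^ (n+1) := Summable.tsum_eq_zero_add (hgsum sigma)
    _ = delta ^ sigma + sigma * ∑' (n : ℕ),
          a ^ (n + 1) *
          ∑ m ∈ Finset.Nat.antidiagonalTuple l (n + 1),
            (∏ i : Fin l, c (i + 1) ^ m i / (m i)!) *
              ((sigma + n + k * ∑ j : Fin l, ((j : ℕ) + 1) * m j)! /
                ((sigma + k * ∑ j : Fin l, ((j : ℕ) + 1) * m j)! : ℝ)) *
              delta ^ (sigma + n + 1 + k * ∑ j : Fin l, ((j : ℕ) + 1) * m j) := by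
        rw [lagCoef_zero_right, pow_zero, mul_one]
        congr 1
        rw [tsum_congr hfin, tsum_mul_left]
end
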